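/- (Proposition 2.) There exist finite sets 𝒮, 𝒮′, 𝒳, a probability distribution P on 𝒮 × 𝒳 whose marginal on 𝒮 has full support, and a function f : 𝒮 → 𝒮′ such that the Markov-approximation channel κ′ from 𝒮 to 𝒳 defined by κ′ x s := P(X=x | f(S)=f(s)) is NOT a garbling of the direct channel κ from 𝒮 to 𝒳 defined by κ x s := P(X=x | S=s). Equivalently, (X←f(S))·(f(S)←S) ⋠ (X←S). -/
import Mathlib


open Finset

/-- A probability distribution on a finite set. -/
def IsDist {S : Type} [Fintype S] (p : S → ℝ) : Prop :=
  (∀ s, 0 ≤ p s) ∧ ∑ s, p s = 1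

/-- A channel from `S` to `X`: a column-stochastic matrix. -/
def IsChannel {S X : Type} [Fintype S] [Fintype X] (κ : X → S → ℝ) : Prop :=
  (∀ x s, 0 ≤ κ x s) ∧ ∀ s, ∑ x, κ x s = 1

/-- `κ₁` is a garbling of `κ₂` (the Blackwell order `κ₁ ⪯ κ₂`). -/
def IsGarbling {S X₁ X₂ : Type} [Fintype S] [Fintype X₁] [Fintype X₂]
    (κ₁ : X₁ → S → ℝ) (κ₂ : X₂ → S → ℝ) : Prop :=
  ∃ lam : X₁ → X₂ → ℝ, IsChannel lam ∧ ∀ x₁ s, κ₁ x₁ s = ∑ x₂, lam x₁ x₂ * κ₂ x₂ s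

/-- Optimal expected utility: maximum over decision rules `d : X → A`. -/
noncomputable def optUtility {S X A : Type} [Fintype S] [Fintype X] [Fintype A]
    (p : S → ℝ) (u : A × S → ℝ) (κ : X → S → ℝ) : ℝ :=
  ⨆ d : X → A, ∑ s, ∑ x, p s * κ x s * u (d x, s)

/-- Mutual information between input (with distribution `p`) and output of channel `κ`;
terms with `κ x s = 0` are taken to be `0`. -/
noncomputable def mutualInfo {S X : Type} [Fintype S] [Fintype X]
    (p : S → ℝ) (κ : X → S → ℝ) : ℝ :=
  ∑ s, ∑ x, if κ x s = 0 then 0 else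
    p s * κ x s * Real.log (κ x s / ∑ s', p s' * κ x s')

/-- Channel composition: `(κ·λ) x s = ∑ t, κ x t * λ t s`. -/
def chanComp {S T X : Type} [Fintype S] [Fintype T] [Fintype X]
    (κ : X → T → ℝ) (lam : T → S → ℝ) : X → S → ℝ :=
  fun x s => ∑ t, κ x t * lam t s

/-- Marginal on `S` of a joint distribution on `S × X₁ × X₂`. -/
noncomputable def margS3 {S X₁ X₂ : Type} [Fintype S] [Fintype X₁] [Fintype X₂]
    (P : S × X₁ × X₂ → ℝ) (s : S) : ℝ := ∑ x₁, ∑ x₂, P (s, x₁, x₂)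

/-- The channel `X₁ ← S` of conditional probabilities `P(X₁ = x₁ | S = s)`. -/
noncomputable def chan1of3 {S X₁ X₂ : Type} [Fintype S] [Fintype X₁] [Fintype X₂]
    (P : S × X₁ × X₂ → ℝ) (x₁ : X₁) (s : S) : ℝ :=
  (∑ x₂, P (s, x₁, x₂)) / margS3 P s

/-- The channel `X₂ ← S` of conditional probabilities `P(X₂ = x₂ | S = s)`. -/
noncomputable def chan2of3 {S X₁ X₂ : Type} [Fintype S] [Fintype X₁] [Fintype X₂]
    (P : S × X₁ × X₂ → ℝ) (x₂ : X₂) (s : S) : ℝ :=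
  (∑ x₁, P (s, x₁, x₂)) / margS3 P s

/-- Pushforward of a joint distribution on `S × X₁ × X₂` along `f : S → S'`. -/
noncomputable def push3 {S S' X₁ X₂ : Type} [Fintype S] [Fintype X₁] [Fintype X₂]
    [DecidableEq S'] (f : S → S') (P : S × X₁ × X₂ → ℝ) : S' × X₁ × X₂ → ℝ :=
  fun q => ∑ s ∈ Finset.univ.filter (fun s => f s = q.1), P (s, q.2.1, q.2.2)

/-- Marginal on `S` of a joint distribution on `S × X`. -/
noncomputable def margS2 {S X : Type} [Fintype S] [Fintype X]
    (P : S × X → ℝ) (s : S) : ℝ := ∑ x, P (s, x)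

/-- The direct channel `X ← S` with entries `P(X = x | S = s)`. -/
noncomputable def chanDirect {S X : Type} [Fintype S] [Fintype X]
    (P : S × X → ℝ) (x : X) (s : S) : ℝ := P (s, x) / margS2 P s

/-- The Markov-approximation channel with entries `P(X = x | f(S) = f(s))`. -/
noncomputable def chanMarkov {S S' X : Type} [Fintype S] [Fintype X] [DecidableEq S']
    (f : S → S') (P : S × X → ℝ) (x : X) (s : S) : ℝ :=
  (∑ s' ∈ Finset.univ.filter (fun s' => f s' = f s), P (s', x)) /
    (∑ s' ∈ Finset.univ.filter (fun s' => f s' = f s), margS2 P s')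

/-- Proposition 2: there exist finite sets, a joint distribution `P` of
`(S, X)` whose marginal on `S` has full support, and a function `f : S → S'` such that
the Markov-approximation channel `κ' x s = P(X=x | f(S)=f(s))` is not a garbling of the
direct channel `κ x s = P(X=x | S=s)`. -/
theorem prop2_markov_approx_not_garbling :
    ∃ (nS nS' nX : ℕ) (P : Fin nS × Fin nX → ℝ) (f : Fin nS → Fin nS'),
      (∀ q, 0 ≤ P q) ∧ (∑ q, P q = 1) ∧ (∀ s, 0 < margS2 P s) ∧
      ¬ IsGarbling (chanMarkov f P) (chanDirect P) := by
  refine ⟨3, 2, 2, fun q => if q.2 = (if q.1 = 2 then 1 else 0) then 1/3 else 0,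
    fun s => if s = 0 then 0 else 1, ?_, ?_, ?_, ?_⟩
  · intro q; dsimp only; split <;> split <;> norm_num
  · rw [Fintype.sum_prod_type]
    simp [Fin.sum_univ_three, Fin.sum_univ_two]
    norm_num
  · intro s
    fin_cases s <;> simp [margS2, Fin.sum_univ_two]
  · rintro ⟨lam, hch, h⟩
    have h0 := h 0 0
    have h1 := h 0 1
    simp only [chanMarkov, chanDirect, margS2, Fin.sum_univ_two, Fin.sum_univ_three,
      Finset.sum_filter, Fin.isValue] at h0 h1
    norm_num [Fin.ext_iff] at h0 h1
    linarith
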